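/- Let G = ⟨a_i : i ∈ ℤ⟩ with relations [a_i, a_j] = 1 for |i−j| > 1 and a_{i+1} a_i a_{i+1}⁻¹ = a_i⁻¹, and let ⟨G, u⟩ be the extension by an infinite cyclic group ⟨u⟩ with u⁻¹ a_i u = a_i⁻¹ for all i. Then ⟨G, u⟩ is right-orderable but admits no discrete right-order. -/

import Mathlib

variable {G : Type*} [Group G]

/-- A right order on a group: a strict total order invariant under right multiplication. -/
def IsRightOrder (r : G → G → Prop) : Prop :=
  IsStrictTotalOrder G r ∧ ∀ f g h : G, r f g → r (f * h) (g * h)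

/-- `a` is the least element greater than the identity for the order `r`. -/
def LeastPos (r : G → G → Prop) (a : G) : Prop :=
  r 1 a ∧ ∀ g : G, r 1 g → g = a ∨ r a g

/-- Relations for the group `⟨G, u⟩`, where `G = ⟨aᵢ (i ∈ ℤ) | [aᵢ, aⱼ] = 1 for |i-j| > 1,
a_{i+1} aᵢ a_{i+1}⁻¹ = aᵢ⁻¹⟩` and `u⁻¹ aᵢ u = aᵢ⁻¹` for all `i`.  The generator
`some i` is `aᵢ` and `none` is `u`. -/
def guRels : Set (FreeGroup (Option ℤ)) :=
  {w | (∃ i j : ℤ, 1 < |i - j| ∧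
          w = FreeGroup.of (some i) * FreeGroup.of (some j) *
            (FreeGroup.of (some i))⁻¹ * (FreeGroup.of (some j))⁻¹) ∨
       (∃ i : ℤ, w = FreeGroup.of (some (i + 1)) * FreeGroup.of (some i) *
            (FreeGroup.of (some (i + 1)))⁻¹ * FreeGroup.of (some i)) ∨
       (∃ i : ℤ, w = (FreeGroup.of none)⁻¹ * FreeGroup.of (some i) *
            FreeGroup.of none * FreeGroup.of (some i))}

/-- The group `⟨G, u⟩`. -/
abbrev GuGroup := PresentedGroup guRels


namespace Stmt15

/-- sign of parity -/
noncomputable def eps (n : ℤ) : ℤ := if Even n then 1 else -1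

lemma eps_even {n : ℤ} (h : Even n) : eps n = 1 := by simp [eps, h]
lemma eps_odd {n : ℤ} (h : ¬ Even n) : eps n = -1 := by simp [eps, h]
@[simp] lemma eps_zero : eps 0 = 1 := by simp [eps]
@[simp] lemma eps_one : eps 1 = -1 := by simp [eps]
lemma eps_add (a b : ℤ) : eps (a + b) = eps a * eps b := by
  by_cases ha : Even a <;> by_cases hb : Even b <;>
    simp [eps, ha, hb, Int.even_add]
@[simp] lemma eps_neg (a : ℤ) : eps (-a) = eps a := by
  by_cases ha : Even a <;> simp [eps, ha]
@[simp] lemma eps_mul_self (a : ℤ) : eps a * eps a = 1 := by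
  by_cases ha : Even a <;> simp [eps, ha]
lemma eps_ne_zero (a : ℤ) : eps a ≠ 0 := by
  by_cases ha : Even a <;> simp [eps, ha]
@[simp] lemma eps_eps_mul (a b : ℤ) : eps (eps a * b) = eps b := by
  by_cases ha : Even a
  · rw [eps_even ha, one_mul]
  · rw [eps_odd ha]; rw [show (-1 : ℤ) * b = -b by ring, eps_neg]
lemma eps_cases (a : ℤ) : eps a = 1 ∨ eps a = -1 := by
  by_cases ha : Even a
  · exact Or.inl (eps_even ha)
  · exact Or.inr (eps_odd ha)
lemma eps_add_even {b : ℤ} (a : ℤ) (hb : Even b) : eps (a + b) = eps a := by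
  rw [eps_add, eps_even hb, mul_one]

/-- The concrete model: pairs `(v, k)` with twisted multiplication. -/
structure K where
  v : ℤ → ℤ
  k : ℤ

namespace K

@[ext] lemma ext {x y : K} (hv : ∀ j, x.v j = y.v j) (hk : x.k = y.k) : x = y := by
  cases x; cases y; simp only [mk.injEq]
  exact ⟨funext hv, hk⟩

noncomputable def kmul (x y : K) : K :=
  ⟨fun j => x.v j + eps (x.v (j+1)) * eps x.k * y.v j, x.k + y.k⟩
noncomputable def kinv (x : K) : K :=
  ⟨fun j => -(eps x.k * eps (x.v (j+1)) * x.v j), -x.k⟩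

lemma kmul_assoc (x y z : K) : kmul (kmul x y) z = kmul x (kmul y z) := by
  refine ext (fun j => ?_) (add_assoc _ _ _)
  show x.v j + eps (x.v (j+1)) * eps x.k * y.v j +
      eps (x.v (j+1) + eps (x.v (j+1+1)) * eps x.k * y.v (j+1)) * eps (x.k + y.k) * z.v j
    = x.v j + eps (x.v (j+1)) * eps x.k *
        (y.v j + eps (y.v (j+1)) * eps y.k * z.v j)
  rw [eps_add, eps_add, mul_assoc (eps (x.v (j+1+1))), eps_eps_mul, eps_eps_mul]
  ring

lemma kone_mul (x : K) : kmul ⟨fun _ => 0, 0⟩ x = x := by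
  refine ext (fun j => ?_) (zero_add _)
  show (0 : ℤ) + eps 0 * eps 0 * x.v j = x.v j
  simp

lemma kmul_one (x : K) : kmul x ⟨fun _ => 0, 0⟩ = x := by
  refine ext (fun j => ?_) (add_zero _)
  show x.v j + eps (x.v (j+1)) * eps x.k * 0 = x.v j
  ring

lemma kinv_mul (x : K) : kmul (kinv x) x = ⟨fun _ => 0, 0⟩ := by
  refine ext (fun j => ?_) (neg_add_cancel _)
  show -(eps x.k * eps (x.v (j+1)) * x.v j) +
      eps (-(eps x.k * eps (x.v (j+1+1)) * x.v (j+1))) * eps (-x.k) * x.v j = 0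
  rw [mul_assoc (eps x.k) (eps (x.v (j+1+1))) (x.v (j+1))]
  simp only [eps_neg, eps_eps_mul]
  ring

noncomputable instance : Group K where
  mul := kmul
  one := ⟨fun _ => 0, 0⟩
  inv := kinv
  mul_assoc := kmul_assoc
  one_mul := kone_mul
  mul_one := kmul_one
  inv_mul_cancel := kinv_mul

lemma mul_def (x y : K) : x * y = kmul x y := rfl
lemma inv_def (x : K) : x⁻¹ = kinv x := rfl
lemma one_def : (1 : K) = ⟨fun _ => 0, 0⟩ := rfl

@[simp] lemma mul_v (x y : K) (j : ℤ) :
    (x * y).v j = x.v j + eps (x.v (j+1)) * eps x.k * y.v j := rfl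
@[simp] lemma mul_k (x y : K) : (x * y).k = x.k + y.k := rfl
@[simp] lemma inv_v (x : K) (j : ℤ) :
    x⁻¹.v j = -(eps x.k * eps (x.v (j+1)) * x.v j) := rfl
@[simp] lemma inv_k (x : K) : x⁻¹.k = -x.k := rfl
@[simp] lemma one_v (j : ℤ) : (1 : K).v j = 0 := rfl
@[simp] lemma one_k : (1 : K).k = 0 := rfl

end K
end Stmt15

namespace Stmt15

/-- indicator function -/
noncomputable def ef (i : ℤ) : ℤ → ℤ := fun j => if j = i then 1 else 0

@[simp] lemma ef_self (i : ℤ) : ef i i = 1 := by simp [ef]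
lemma ef_ne {i j : ℤ} (h : j ≠ i) : ef i j = 0 := by simp [ef, h]

noncomputable def aK (i : ℤ) : K := ⟨ef i, 0⟩
noncomputable def uK : K := ⟨fun _ => 0, 1⟩

noncomputable def genK : Option ℤ → K
  | none => uK
  | some i => aK i

lemma eps_ef_ne {i j : ℤ} (h : j ≠ i) : eps (ef i j) = 1 := by
  rw [ef_ne h, eps_zero]

lemma relK1 {i j : ℤ} (h : 1 < |i - j|) :
    aK i * aK j * (aK i)⁻¹ * (aK j)⁻¹ = 1 := by
  have h' : 1 < i - j ∨ 1 < -(i - j) := lt_abs.mp h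
  have hcomm : aK i * aK j = aK j * aK i := by
    refine K.ext (fun m => ?_) (by simp [aK])
    show ef i m + eps (ef i (m+1)) * eps 0 * ef j m
       = ef j m + eps (ef j (m+1)) * eps 0 * ef i m
    by_cases h1 : m = i
    · rw [h1, ef_self, ef_ne (by omega : i ≠ j), eps_ef_ne (by omega : i + 1 ≠ j),
        eps_ef_ne (by omega : i + 1 ≠ i), eps_zero]
      ring
    · by_cases h2 : m = j
      · rw [h2, ef_self, ef_ne (by omega : j ≠ i), eps_ef_ne (by omega : j + 1 ≠ i),
          eps_ef_ne (by omega : j + 1 ≠ j), eps_zero]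
        ring
      · rw [ef_ne h1, ef_ne h2]; ring
  rw [hcomm, mul_assoc (aK j), mul_inv_cancel, mul_one, mul_inv_cancel]

lemma relK2 (i : ℤ) :
    aK (i+1) * aK i * (aK (i+1))⁻¹ * aK i = 1 := by
  have h1 : aK (i+1) * aK i = ⟨fun m => ef (i+1) m - ef i m, 0⟩ := by
    refine K.ext (fun m => ?_) (by simp [aK])
    show ef (i+1) m + eps (ef (i+1) (m+1)) * eps 0 * ef i m = ef (i+1) m - ef i m
    by_cases h2 : m = i
    · rw [h2, ef_self, ef_ne (by omega : i ≠ i + 1), ef_self, eps_one, eps_zero]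
      ring
    · rw [ef_ne h2]; ring
  have h2 : (aK (i+1))⁻¹ = ⟨fun m => -(ef (i+1) m), 0⟩ := by
    refine K.ext (fun m => ?_) (by simp [aK])
    show -(eps 0 * eps (ef (i+1) (m+1)) * ef (i+1) m) = -(ef (i+1) m)
    by_cases h3 : m = i + 1
    · rw [h3, eps_ef_ne (by omega : i + 1 + 1 ≠ i + 1), eps_zero]; ring
    · rw [ef_ne h3]; ring
  rw [h1, h2]
  have h3 : (⟨fun m => ef (i+1) m - ef i m, 0⟩ : K) * ⟨fun m => -(ef (i+1) m), 0⟩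
      = ⟨fun m => -(ef i m), 0⟩ := by
    refine K.ext (fun m => ?_) rfl
    show ef (i+1) m - ef i m + eps (ef (i+1) (m+1) - ef i (m+1)) * eps 0 * (-(ef (i+1) m))
        = -(ef i m)
    by_cases h4 : m = i + 1
    · rw [h4, ef_self, ef_ne (by omega : (i:ℤ) + 1 ≠ i), ef_ne (by omega : (i:ℤ)+1+1 ≠ i+1),
          ef_ne (by omega : (i:ℤ)+1+1 ≠ i), eps_zero]
      norm_num
    · rw [ef_ne h4]; ring
  rw [h3]
  refine K.ext (fun m => ?_) (by simp [aK])
  show -(ef i m) + eps (-(ef i (m+1))) * eps 0 * ef i m = 0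
  by_cases h5 : m = i
  · rw [h5, ef_self, eps_neg, eps_ef_ne (by omega : i + 1 ≠ i), eps_zero]; ring
  · rw [ef_ne h5]; ring

lemma relK3 (i : ℤ) : uK⁻¹ * aK i * uK * aK i = 1 := by
  have h1 : uK⁻¹ = ⟨fun _ => 0, -1⟩ := by
    refine K.ext (fun m => ?_) rfl
    show -(eps 1 * eps 0 * 0) = 0; ring
  have h2 : (⟨fun _ => 0, -1⟩ : K) * aK i = ⟨fun m => -(ef i m), -1⟩ := by
    refine K.ext (fun m => ?_) (by simp [aK])
    show 0 + eps 0 * eps (-1) * ef i m = -(ef i m)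
    rw [eps_zero, show ((-1 : ℤ)) = -(1:ℤ) by ring, eps_neg, eps_one]; ring
  have h3 : (⟨fun m => -(ef i m), -1⟩ : K) * uK = ⟨fun m => -(ef i m), 0⟩ := by
    refine K.ext (fun m => ?_) (by simp [uK])
    show -(ef i m) + eps (-(ef i (m+1))) * eps (-1) * 0 = -(ef i m)
    ring
  have h4 : (⟨fun m => -(ef i m), 0⟩ : K) * aK i = 1 := by
    refine K.ext (fun m => ?_) (by simp [aK, K.one_def])
    show -(ef i m) + eps (-(ef i (m+1))) * eps 0 * ef i m = 0
    by_cases h5 : m = i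
    · rw [h5, ef_self, eps_neg, eps_ef_ne (by omega : i + 1 ≠ i), eps_zero]; ring
    · rw [ef_ne h5]; ring
  rw [h1, h2, h3, h4]

end Stmt15

namespace Stmt15

lemma relsCheck : ∀ w ∈ guRels, FreeGroup.lift genK w = 1 := by
  intro w hw
  rcases hw with ⟨i, j, hij, rfl⟩ | ⟨i, rfl⟩ | ⟨i, rfl⟩
  · simp only [map_mul, map_inv, FreeGroup.lift_apply_of]
    exact relK1 hij
  · simp only [map_mul, map_inv, FreeGroup.lift_apply_of]
    exact relK2 i
  · simp only [map_mul, map_inv, FreeGroup.lift_apply_of]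
    exact relK3 i

noncomputable def phi : GuGroup →* K := PresentedGroup.toGroup relsCheck

/-- generators of `GuGroup` -/
def Ag (i : ℤ) : GuGroup := PresentedGroup.of (some i)
def Ug : GuGroup := PresentedGroup.of none

@[simp] lemma phi_A (i : ℤ) : phi (Ag i) = aK i := PresentedGroup.toGroup.of relsCheck
@[simp] lemma phi_U : phi Ug = uK := PresentedGroup.toGroup.of relsCheck

/-- the canonical projection -/
noncomputable def mkG : FreeGroup (Option ℤ) →* GuGroup :=
  QuotientGroup.mk' (Subgroup.normalClosure guRels)

lemma mkG_surjective : Function.Surjective mkG :=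
  QuotientGroup.mk'_surjective _

lemma mkG_of (x : Option ℤ) : mkG (FreeGroup.of x) = PresentedGroup.of x := rfl

lemma rel_one {w : FreeGroup (Option ℤ)} (hw : w ∈ guRels) : mkG w = 1 :=
  (QuotientGroup.eq_one_iff w).mpr (Subgroup.subset_normalClosure hw)

lemma relG2 (i : ℤ) : Ag (i+1) * Ag i * (Ag (i+1))⁻¹ = (Ag i)⁻¹ := by
  have h := rel_one (show _ ∈ guRels from Or.inr (Or.inl ⟨i, rfl⟩))
  simp only [map_mul, map_inv, mkG_of] at h
  unfold Ag
  exact mul_eq_one_iff_eq_inv.mp h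

lemma relG1 {i j : ℤ} (h : 1 < |i - j|) : Commute (Ag i) (Ag j) := by
  have h1 := rel_one (show _ ∈ guRels from Or.inl ⟨i, j, h, rfl⟩)
  simp only [map_mul, map_inv, mkG_of] at h1
  have h2 : Ag i * Ag j * (Ag i)⁻¹ = Ag j := by
    unfold Ag
    rw [mul_eq_one_iff_eq_inv.mp h1, inv_inv]
  show Ag i * Ag j = Ag j * Ag i
  calc Ag i * Ag j = (Ag i * Ag j * (Ag i)⁻¹) * Ag i := by group
  _ = Ag j * Ag i := by rw [h2]

lemma relG3 (i : ℤ) : Ug * Ag i * Ug⁻¹ = (Ag i)⁻¹ := by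
  have h := rel_one (show _ ∈ guRels from Or.inr (Or.inr ⟨i, rfl⟩))
  simp only [map_mul, map_inv, mkG_of] at h
  -- h : Ug⁻¹ * Ag i * Ug * Ag i = 1, i.e. u⁻¹ a u = a⁻¹
  have h2 : Ug⁻¹ * Ag i * Ug = (Ag i)⁻¹ := by
    unfold Ag Ug
    exact mul_eq_one_iff_eq_inv.mp h
  have h3 : Ug * (Ag i)⁻¹ * Ug⁻¹ = Ag i := by rw [← h2]; group
  calc Ug * Ag i * Ug⁻¹ = (Ug * (Ag i)⁻¹ * Ug⁻¹)⁻¹ := by group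
  _ = (Ag i)⁻¹ := by rw [h3]

end Stmt15

namespace Stmt15

section ConjLemmas
variable {H : Type*} [Group H]

lemma conj_zpow_of_inv {g x : H} (h : g * x * g⁻¹ = x⁻¹) (c : ℤ) :
    g * x ^ c * g⁻¹ = x ^ (-c) := by
  have h0 : (MulAut.conj g) x = x⁻¹ := by simpa [MulAut.conj_apply] using h
  calc g * x ^ c * g⁻¹ = (MulAut.conj g) (x ^ c) := by simp [MulAut.conj_apply]
  _ = ((MulAut.conj g) x) ^ c := map_zpow _ _ _
  _ = (x⁻¹) ^ c := by rw [h0]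
  _ = x ^ (-c) := by rw [inv_zpow, zpow_neg]

lemma comm_sq_of_inv {g x : H} (h : g * x * g⁻¹ = x⁻¹) : Commute (g * g) x := by
  have h1 : (g*g) * x * (g*g)⁻¹ = x := by
    calc (g*g)*x*(g*g)⁻¹ = g*(g*x*g⁻¹)*g⁻¹ := by group
    _ = g * x⁻¹ * g⁻¹ := by rw [h]
    _ = (g * x * g⁻¹)⁻¹ := by group
    _ = x := by rw [h, inv_inv]
  have := mul_inv_eq_iff_eq_mul.mp h1
  exact this

lemma conj_zpow_zpow_of_inv {g x : H} (h : g * x * g⁻¹ = x⁻¹) (s c : ℤ) :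
    g ^ s * x ^ c * g ^ (-s) = x ^ (eps s * c) := by
  rcases Int.even_or_odd s with ⟨m, hm⟩ | ⟨m, hm⟩
  · have h1 : g ^ s = (g * g) ^ m := by
      calc g ^ s = g ^ (2 * m) := by rw [hm]; congr 1; ring
      _ = (g ^ (2:ℤ)) ^ m := by rw [← zpow_mul]
      _ = (g * g) ^ m := by rw [show g ^ (2:ℤ) = g * g by rw [show (2:ℤ) = 1+1 by norm_num, zpow_add, zpow_one]]
    have hcom : Commute (g ^ s) (x ^ c) := by
      rw [h1]
      exact ((comm_sq_of_inv h).zpow_zpow m c)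
    rw [eps_even ⟨m, hm⟩, one_mul, hcom.eq, mul_assoc, ← zpow_add, add_neg_cancel, zpow_zero,
      mul_one]
  · have hodd : ¬ Even s := by
      rw [Int.not_odd_iff_even.symm]; exact not_not_intro ⟨m, hm⟩
    have h1 : g ^ s = (g * g) ^ m * g := by
      calc g ^ s = g ^ (2 * m + 1) := by rw [hm]
      _ = g ^ (2 * m) * g := by rw [zpow_add_one]
      _ = (g ^ (2:ℤ)) ^ m * g := by rw [← zpow_mul]
      _ = (g * g) ^ m * g := by rw [show g ^ (2:ℤ) = g * g by rw [show (2:ℤ) = 1+1 by norm_num, zpow_add, zpow_one]]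
    have hmid := conj_zpow_of_inv h c
    have hcomm : Commute ((g * g) ^ m) (x ^ (-c)) := (comm_sq_of_inv h).zpow_zpow m (-c)
    rw [show eps s * c = -c by rw [eps_odd hodd]; ring]
    rw [zpow_neg, h1]
    calc ((g*g)^m * g) * x^c * ((g*g)^m * g)⁻¹
        = (g*g)^m * (g * x^c * g⁻¹) * ((g*g)^m)⁻¹ := by group
    _ = (g*g)^m * x^(-c) * ((g*g)^m)⁻¹ := by rw [hmid]
    _ = x^(-c) * (g*g)^m * ((g*g)^m)⁻¹ := by rw [hcomm.eq]
    _ = x^(-c) := by group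

end ConjLemmas
end Stmt15

namespace Stmt15

/-- move `x^c` leftwards past `g^s` when `g x g⁻¹ = x⁻¹` -/
lemma swap_zpow {H : Type*} [Group H] {g x : H} (h : g * x * g⁻¹ = x⁻¹) (s c : ℤ) :
    x ^ c * g ^ s = g ^ s * x ^ (eps s * c) := by
  have h1 := conj_zpow_zpow_of_inv h s (eps s * c)
  have h3 : eps s * (eps s * c) = c := by rw [← mul_assoc, eps_mul_self, one_mul]
  rw [h3] at h1
  rw [← h1]
  group

/-- the exponent of `Ag j` in the normal form of `v` -/
noncomputable def xc (v : ℤ → ℤ) (j : ℤ) : ℤ := eps (v (j+1)) * v j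

lemma xc_zero {v : ℤ → ℤ} {j : ℤ} (h : v j = 0) : xc v j = 0 := by
  simp [xc, h]

/-- descending product `Ag T ^ xc v T * ... * Ag (T-n+1) ^ xc v (T-n+1)` -/
noncomputable def pb (v : ℤ → ℤ) (T : ℤ) : ℕ → GuGroup
  | 0 => 1
  | n+1 => pb v T n * (Ag ((T : ℤ) - n)) ^ (xc v ((T : ℤ) - n))

lemma pb_succ (v : ℤ → ℤ) (T : ℤ) (n : ℕ) :
    pb v T (n+1) = pb v T n * (Ag ((T : ℤ) - n)) ^ (xc v ((T : ℤ) - n)) := rfl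

lemma pb_split (v : ℤ → ℤ) (T : ℤ) (n₁ n₂ : ℕ) :
    pb v T (n₁ + n₂) = pb v T n₁ * pb v (T - n₁) n₂ := by
  induction n₂ with
  | zero => simp [pb]
  | succ n ih =>
      have h1 : n₁ + (n + 1) = (n₁ + n) + 1 := by ring
      rw [h1, pb_succ, ih, pb_succ, mul_assoc]
      congr 2 <;> push_cast <;> ring_nf

lemma pb_congr {v w : ℤ → ℤ} (T : ℤ) (n : ℕ)
    (h : ∀ j, T - n < j → j ≤ T → xc v j = xc w j) : pb v T n = pb w T n := by
  induction n with
  | zero => rfl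
  | succ n ih =>
      rw [pb_succ, pb_succ, ih (fun j h1 h2 => h j (by push_cast at h1 ⊢; omega) h2),
        h (T - n) (by push_cast; omega) (by push_cast; omega)]

lemma pb_one {v : ℤ → ℤ} (T : ℤ) (n : ℕ)
    (h : ∀ j, T - n < j → j ≤ T → v j = 0) : pb v T n = 1 := by
  induction n with
  | zero => rfl
  | succ n ih =>
      rw [pb_succ, ih (fun j h1 h2 => h j (by push_cast at h1 ⊢; omega) h2),
        xc_zero (h ((T:ℤ) - n) (by push_cast; omega) (by push_cast; omega)), zpow_zero,
        one_mul]

lemma pb_commute {v : ℤ → ℤ} (T : ℤ) (n : ℕ) {i : ℤ}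
    (h : ∀ j, T - n < j → j ≤ T → 1 < |i - j|) (c : ℤ) :
    Commute ((Ag i) ^ c) (pb v T n) := by
  induction n with
  | zero => exact Commute.one_right _
  | succ n ih =>
      rw [pb_succ]
      refine Commute.mul_right (ih (fun j h1 h2 => h j (by push_cast at h1 ⊢; omega) h2)) ?_
      exact (relG1 (h ((T:ℤ) - n) (by push_cast; omega) (by push_cast; omega))).zpow_zpow c _

/-- `pb` window enlargement -/
lemma pb_stable {v : ℤ → ℤ} {T : ℤ} {n : ℕ} {T' : ℤ} {n' : ℕ}
    (hTT : T ≤ T') (hbb : (T' : ℤ) - n' ≤ T - n)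
    (htop : ∀ j, T < j → v j = 0) (hbot : ∀ j, j ≤ (T:ℤ) - n → v j = 0) :
    pb v T' n' = pb v T n := by
  have h1 : ∃ m : ℕ, (T : ℤ) = T' - m := ⟨(T' - T).toNat, by omega⟩
  rcases h1 with ⟨m, hm⟩
  have h2 : ∃ p : ℕ, n' = m + n + p := ⟨n' - (m + n), by omega⟩
  rcases h2 with ⟨p, hp⟩
  rw [hp, pb_split, pb_split, ← hm,
    show (T' : ℤ) - ↑(m+n) = T - (n:ℤ) by push_cast; omega]
  rw [pb_one T' m (fun j hj1 hj2 => htop j (by omega))]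
  rw [pb_one ((T:ℤ) - (n:ℤ)) p (fun j hj1 hj2 => hbot j (by omega))]
  rw [one_mul, mul_one]
  

end Stmt15

namespace Stmt15

lemma relG3inv (i : ℤ) : Ug⁻¹ * Ag i * (Ug⁻¹)⁻¹ = (Ag i)⁻¹ := by
  have h := rel_one (show _ ∈ guRels from Or.inr (Or.inr ⟨i, rfl⟩))
  simp only [map_mul, map_inv, mkG_of] at h
  rw [inv_inv]
  unfold Ag Ug
  exact mul_eq_one_iff_eq_inv.mp h

lemma xc_neg (v : ℤ → ℤ) (j : ℤ) : xc (fun m => -(v m)) j = -(xc v j) := by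
  simp [xc]

lemma keyU {c : ℤ} (hc : c = 1 ∨ c = -1) (v : ℤ → ℤ) (T : ℤ) (n : ℕ) :
    Ug ^ c * pb v T n = pb (fun m => -(v m)) T n * Ug ^ c := by
  have hconj : ∀ i : ℤ, Ug ^ c * Ag i * (Ug ^ c)⁻¹ = (Ag i)⁻¹ := by
    intro i
    rcases hc with rfl | rfl
    · simpa using relG3 i
    · simpa using relG3inv i
  induction n with
  | zero => simp [pb]
  | succ n ih =>
      rw [pb_succ, pb_succ, ← mul_assoc, ih, xc_neg, mul_assoc, mul_assoc]
      congr 1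
      have h1 := conj_zpow_of_inv (hconj ((T:ℤ) - n)) (xc v ((T:ℤ) - n))
      calc Ug ^ c * Ag ((T:ℤ) - n) ^ xc v ((T:ℤ) - n)
          = (Ug ^ c * Ag ((T:ℤ) - n) ^ xc v ((T:ℤ) - n) * (Ug ^ c)⁻¹) * Ug ^ c := by group
      _ = Ag ((T:ℤ) - n) ^ (-xc v ((T:ℤ) - n)) * Ug ^ c := by rw [h1]

/-- effect of left multiplication by `Ag i ^ c` on the `v`-part -/
noncomputable def updA (i c : ℤ) (v : ℤ → ℤ) : ℤ → ℤ :=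
  fun j => if j = i then c + v i else if j = i - 1 then -(v (i-1)) else v j

lemma updA_self (i c : ℤ) (v : ℤ → ℤ) : updA i c v i = c + v i := by simp [updA]
lemma updA_pred (i c : ℤ) (v : ℤ → ℤ) : updA i c v (i-1) = -(v (i-1)) := by
  simp [updA, show i - 1 ≠ i by omega]
lemma updA_other (i c : ℤ) (v : ℤ → ℤ) {j : ℤ} (h1 : j ≠ i) (h2 : j ≠ i - 1) :
    updA i c v j = v j := by simp [updA, h1, h2]

lemma pb_single (w : ℤ → ℤ) (S : ℤ) : pb w S 1 = Ag S ^ xc w S := by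
  show pb w S 0 * Ag (S - ((0:ℕ):ℤ)) ^ xc w (S - ((0:ℕ):ℤ)) = _
  norm_num [pb]

lemma keyA {i c : ℤ} (hc : c = 1 ∨ c = -1) (v : ℤ → ℤ) (T : ℤ) (n : ℕ)
    (hT : i + 1 ≤ T) (hn : (T:ℤ) - n ≤ i - 1) :
    (Ag i) ^ c * pb v T n = pb (updA i c v) T n := by
  have hcodd : ¬ Even c := by rcases hc with rfl | rfl <;> decide
  set n₃ := (T - (i+1)).toNat with hn₃
  have e3 : (T:ℤ) - n₃ = i + 1 := by
    rw [hn₃, Int.toNat_of_nonneg (by omega)]; ring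
  have e4 : ∃ n₀ : ℕ, n = n₃ + (1 + (1 + n₀)) := by
    refine ⟨n - n₃ - 2, ?_⟩
    have : (n₃ : ℤ) = T - (i+1) := by rw [hn₃, Int.toNat_of_nonneg (by omega)]
    omega
  rcases e4 with ⟨n₀, rfl⟩
  -- decompose both sides
  have hsplit : ∀ w : ℤ → ℤ, pb w T (n₃ + (1 + (1 + n₀)))
      = pb w T n₃ * ((Ag (i+1)) ^ (xc w (i+1)) * ((Ag i) ^ (xc w i) * pb w (i-1) n₀)) := by
    intro w
    rw [pb_split, pb_split, e3, show (i + 1 - ((1:ℕ):ℤ) : ℤ) = i by push_cast; ring,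
      pb_split, show ((i:ℤ) - ((1:ℕ):ℤ) : ℤ) = i - 1 by push_cast; ring,
      pb_single, pb_single]
  rw [hsplit, hsplit]
  -- top block is unchanged and commutes with Ag i ^ c
  have htopeq : pb (updA i c v) T n₃ = pb v T n₃ := by
    refine pb_congr T n₃ (fun j hj1 hj2 => ?_)
    have hj : i + 1 < j := by omega
    unfold xc
    rw [updA_other i c v (by omega) (by omega), updA_other i c v (by omega) (by omega)]
  have hcomm : Commute ((Ag i) ^ c) (pb v T n₃) := by
    refine pb_commute T n₃ (fun j hj1 hj2 => ?_) c
    have : i + 1 < j := by omega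
    exact lt_abs.mpr (Or.inr (by omega))
  -- bottom block is unchanged
  have hboteq : pb (updA i c v) (i-1) n₀ = pb v (i-1) n₀ := by
    refine pb_congr (i-1) n₀ (fun j hj1 hj2 => ?_)
    unfold xc
    by_cases hja : j = i - 1
    · rw [hja, show i - 1 + 1 = i by ring, updA_self, updA_pred]
      rw [eps_add, eps_odd hcodd]
      ring
    · by_cases hjb : j + 1 = i - 1
      · rw [updA_other i c v (by omega) hja, hjb, updA_pred, eps_neg]
      · rw [updA_other i c v (by omega) hja, updA_other i c v (by omega) hjb]
  -- exponents at i+1 and i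
  have hx1 : xc (updA i c v) (i+1) = xc v (i+1) := by
    unfold xc
    rw [updA_other i c v (by omega) (by omega), updA_other i c v (by omega) (by omega)]
  have hx0 : xc (updA i c v) i = xc v i + eps (v (i+1)) * c := by
    unfold xc
    rw [updA_self, updA_other i c v (by omega) (by omega)]
    ring
  rw [htopeq, hboteq, hx1, hx0]
  rw [← mul_assoc, hcomm.eq, mul_assoc]
  congr 1
  rw [← mul_assoc, swap_zpow (relG2 i) (xc v (i+1)) c, mul_assoc]
  congr 1
  have he : eps (xc v (i+1)) = eps (v (i+1)) := by unfold xc; rw [eps_eps_mul]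
  rw [← mul_assoc, ← zpow_add, he,
    show eps (v (i+1)) * c + xc v i = xc v i + eps (v (i+1)) * c from by ring]

end Stmt15

namespace Stmt15

@[simp] lemma K.mk_v (f : ℤ → ℤ) (k : ℤ) (j : ℤ) : (K.mk f k).v j = f j := rfl
@[simp] lemma K.mk_k (f : ℤ → ℤ) (k : ℤ) : (K.mk f k).k = k := rfl

lemma aK_inv (i : ℤ) : (aK i)⁻¹ = ⟨fun m => -(ef i m), 0⟩ := by
  refine K.ext (fun m => ?_) (by simp [aK])
  show -(eps 0 * eps (ef i (m+1)) * ef i m) = -(ef i m)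
  by_cases h3 : m = i
  · rw [h3, eps_ef_ne (by omega : i + 1 ≠ i), eps_zero]; ring
  · rw [ef_ne h3]; ring

lemma uK_inv : uK⁻¹ = ⟨fun _ => 0, -1⟩ := by
  refine K.ext (fun m => ?_) rfl
  show -(eps 1 * eps 0 * 0) = 0; ring

lemma aK_zpow_mul {i c : ℤ} (hc : c = 1 ∨ c = -1) (x : K) :
    (aK i) ^ c * x = ⟨updA i c x.v, x.k⟩ := by
  rcases hc with rfl | rfl
  · rw [zpow_one]
    refine K.ext (fun j => ?_) (by simp [aK])
    show ef i j + eps (ef i (j+1)) * eps 0 * x.v j = updA i 1 x.v j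
    by_cases h1 : j = i
    · rw [h1, ef_self, updA_self, eps_ef_ne (by omega : i + 1 ≠ i), eps_zero]; ring
    · by_cases h2 : j = i - 1
      · rw [h2, ef_ne (by omega), show i - 1 + 1 = i by ring, ef_self, eps_one, eps_zero,
          updA_pred]
        ring
      · rw [ef_ne h1, updA_other i 1 x.v h1 h2, eps_ef_ne (by omega : j + 1 ≠ i), eps_zero]
        ring
  · rw [zpow_neg_one, aK_inv]
    refine K.ext (fun j => ?_) (by simp)
    show -(ef i j) + eps (-(ef i (j+1))) * eps 0 * x.v j = updA i (-1) x.v j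
    by_cases h1 : j = i
    · rw [h1, ef_self, updA_self, eps_neg, eps_ef_ne (by omega : i + 1 ≠ i), eps_zero]; ring
    · by_cases h2 : j = i - 1
      · rw [h2, ef_ne (by omega), show i - 1 + 1 = i by ring, ef_self, eps_neg, eps_one,
          eps_zero, updA_pred]
        ring
      · rw [ef_ne h1, updA_other i (-1) x.v h1 h2, eps_neg,
          eps_ef_ne (by omega : j + 1 ≠ i), eps_zero]
        ring

lemma uK_zpow_mul {c : ℤ} (hc : c = 1 ∨ c = -1) (x : K) :
    uK ^ c * x = ⟨fun j => -(x.v j), c + x.k⟩ := by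
  rcases hc with rfl | rfl
  · rw [zpow_one]
    refine K.ext (fun j => ?_) rfl
    show 0 + eps 0 * eps 1 * x.v j = -(x.v j)
    rw [eps_zero, eps_one]; ring
  · rw [zpow_neg_one, uK_inv]
    refine K.ext (fun j => ?_) rfl
    show 0 + eps 0 * eps (-1) * x.v j = -(x.v j)
    rw [eps_zero, show ((-1:ℤ)) = -(1:ℤ) by ring, eps_neg, eps_one]; ring

/-- the normal-form predicate -/
def NFP (g : GuGroup) : Prop :=
  ∀ (T : ℤ) (n : ℕ), (∀ j, T < j → (phi g).v j = 0) →
    (∀ j, j ≤ (T:ℤ) - n → (phi g).v j = 0) →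
    g = pb (phi g).v T n * Ug ^ ((phi g).k)

lemma NFP_one : NFP 1 := by
  intro T n _ _
  rw [map_one]
  rw [pb_one (v := (1:K).v) T n (fun j _ _ => rfl), one_mul]
  show (1 : GuGroup) = Ug ^ (0:ℤ)
  simp

lemma NFP_stepU {c : ℤ} (hc : c = 1 ∨ c = -1) {g' : GuGroup} (h' : NFP g') :
    NFP (Ug ^ c * g') := by
  intro T n htop hbot
  have hK : phi (Ug ^ c * g') = ⟨fun j => -((phi g').v j), c + (phi g').k⟩ := by
    rw [map_mul, map_zpow, phi_U, uK_zpow_mul hc]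
  rw [hK] at htop hbot ⊢
  simp only [K.mk_v, K.mk_k] at htop hbot ⊢
  have h'' := h' T n (fun j hj => neg_eq_zero.mp (htop j hj))
    (fun j hj => neg_eq_zero.mp (hbot j hj))
  calc Ug ^ c * g' = Ug ^ c * (pb (phi g').v T n * Ug ^ (phi g').k) := by rw [← h'']
  _ = pb (fun j => -((phi g').v j)) T n * Ug ^ (c + (phi g').k) := by
      rw [← mul_assoc, keyU hc _ T n, mul_assoc, ← zpow_add]

lemma NFP_stepA {i c : ℤ} (hc : c = 1 ∨ c = -1) {g' : GuGroup} (h' : NFP g') :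
    NFP ((Ag i) ^ c * g') := by
  intro T n htop hbot
  have hK : phi ((Ag i) ^ c * g') = ⟨updA i c (phi g').v, (phi g').k⟩ := by
    rw [map_mul, map_zpow, phi_A, aK_zpow_mul hc]
  rw [hK] at htop hbot ⊢
  simp only [K.mk_v, K.mk_k] at htop hbot ⊢
  set w' := (phi g').v with hw'
  set T'' := max T (i+1) with hT''
  set n'' := (T'' - min ((T:ℤ)-n) (i-2)).toNat with hn''
  have hb'' : (T'':ℤ) - n'' = min ((T:ℤ)-n) (i-2) := by
    rw [hn'', Int.toNat_of_nonneg (by omega)]; ring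
  have hw'top : ∀ j, T'' < j → w' j = 0 := by
    intro j hj
    have h1 : updA i c w' j = w' j := updA_other i c w' (by omega) (by omega)
    rw [← h1]
    exact htop j (by omega)
  have hw'bot : ∀ j, j ≤ (T'':ℤ) - n'' → w' j = 0 := by
    intro j hj
    rw [hb''] at hj
    have h1 : updA i c w' j = w' j := updA_other i c w' (by omega) (by omega)
    rw [← h1]
    exact hbot j (by omega)
  have h'' := h' T'' n'' hw'top hw'bot
  calc (Ag i) ^ c * g' = (Ag i) ^ c * (pb w' T'' n'' * Ug ^ (phi g').k) := by rw [← h'']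
  _ = pb (updA i c w') T'' n'' * Ug ^ (phi g').k := by
      rw [← mul_assoc, keyA hc w' T'' n'' (le_max_right T (i+1)) (by rw [hb'']; omega)]
  _ = pb (updA i c w') T n * Ug ^ (phi g').k := by
      rw [pb_stable (le_max_left T (i+1)) (by rw [hb'']; omega) htop hbot]

lemma NFP_all : ∀ g : GuGroup, NFP g := by
  have hlist : ∀ L : List (Option ℤ × Bool), NFP (mkG (FreeGroup.mk L)) := by
    intro L
    induction L with
    | nil => exact NFP_one
    | cons p t ih =>
        obtain ⟨x, b⟩ := p
        have hmk : FreeGroup.mk ((x, b) :: t)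
            = FreeGroup.mk [(x, b)] * FreeGroup.mk t := by rw [FreeGroup.mul_mk]; simp
        rw [hmk, map_mul]
        have hsingle : mkG (FreeGroup.mk [(x, b)])
            = (PresentedGroup.of (α := Option ℤ) x) ^ (if b then (1:ℤ) else -1) := by
          cases b
          · have h1 : FreeGroup.mk [(x, false)] = (FreeGroup.of x)⁻¹ := by
              show FreeGroup.mk [(x, false)] = (FreeGroup.mk [(x, true)])⁻¹
              rw [FreeGroup.inv_mk]
              rfl
            rw [h1, map_inv, mkG_of]
            simp
          · rw [show FreeGroup.mk [(x, true)] = FreeGroup.of x from rfl, mkG_of]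
            simp
        rw [hsingle]
        have hc : (if b then (1:ℤ) else -1) = 1 ∨ (if b then (1:ℤ) else -1) = -1 := by
          cases b <;> simp
        cases x with
        | none => exact NFP_stepU hc ih
        | some i => exact NFP_stepA hc ih
  intro g
  obtain ⟨w, rfl⟩ := mkG_surjective g
  rw [← FreeGroup.mk_toWord (x := w)]
  exact hlist _

lemma phi_inj : Function.Injective phi := by
  refine (injective_iff_map_eq_one phi).mpr (fun g hg => ?_)
  have h1 := NFP_all g 0 0 (fun j _ => by rw [hg]; rfl) (fun j _ => by rw [hg]; rfl)
  rw [hg] at h1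
  rw [h1]
  show 1 * Ug ^ (0:ℤ) = 1
  simp

end Stmt15

namespace Stmt15

lemma bddSupp (g : GuGroup) : ∃ N : ℕ, ∀ j : ℤ, (N:ℤ) < |j| → (phi g).v j = 0 := by
  obtain ⟨w, rfl⟩ := mkG_surjective g
  induction w using FreeGroup.induction_on with
  | C1 =>
      exact ⟨0, fun j _ => by rw [map_one, map_one]; rfl⟩
  | of x =>
      cases x with
      | none =>
          refine ⟨0, fun j hj => ?_⟩
          rw [show (FreeGroup.of none : FreeGroup (Option ℤ)) = FreeGroup.of none from rfl, mkG_of,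
            show phi (PresentedGroup.of none) = uK from phi_U]
          rfl
      | some i =>
          refine ⟨i.natAbs, fun j hj => ?_⟩
          rw [show (FreeGroup.of (some i) : FreeGroup (Option ℤ)) = FreeGroup.of (some i) from rfl,
            mkG_of, show phi (PresentedGroup.of (some i)) = aK i from phi_A i]
          show ef i j = 0
          refine ef_ne (fun hji => ?_)
          rw [hji, Int.abs_eq_natAbs] at hj
          omega
  | inv_of x ih =>
      obtain ⟨N, hN⟩ := ih
      refine ⟨N, fun j hj => ?_⟩
      rw [map_inv, map_inv]
      show -(eps _ * eps _ * (phi (mkG (FreeGroup.of x))).v j) = 0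
      rw [hN j hj]
      try ring
  | mul x y ihx ihy =>
      obtain ⟨N1, hN1⟩ := ihx
      obtain ⟨N2, hN2⟩ := ihy
      refine ⟨max N1 N2, fun j hj => ?_⟩
      rw [map_mul, map_mul]
      show (phi (mkG x)).v j + eps _ * eps _ * (phi (mkG y)).v j = 0
      rw [hN1 j (by push_cast at hj ⊢; omega), hN2 j (by push_cast at hj ⊢; omega)]
      ring

lemma aK_zpow (i s : ℤ) : (aK i) ^ s = K.mk (fun j => if j = i then s else 0) 0 := by
  induction s using Int.induction_on with
  | zero =>
      rw [zpow_zero]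
      refine K.ext (fun j => ?_) rfl
      show (0:ℤ) = if j = i then 0 else 0
      simp
  | succ m ih =>
      rw [zpow_add_one, ih]
      refine K.ext (fun j => ?_) (by simp [aK])
      show (if j = i then (m:ℤ) else 0) + eps (if j+1 = i then (m:ℤ) else 0) * eps 0 * ef i j
          = if j = i then (m:ℤ)+1 else 0
      by_cases hji : j = i
      · rw [if_pos hji, if_pos hji, if_neg (by omega), hji, ef_self]
        simp only [eps_zero]
        ring
      · rw [if_neg hji, if_neg hji, ef_ne hji]; ring
  | pred m ih =>
      rw [show (-(m:ℤ) - 1) = (-(m:ℤ)) - 1 by ring, zpow_sub_one, ih, aK_inv]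
      refine K.ext (fun j => ?_) (by simp)
      show (if j = i then -(m:ℤ) else 0) + eps (if j+1 = i then -(m:ℤ) else 0) * eps 0 *
          (-(ef i j)) = if j = i then -(m:ℤ)-1 else 0
      by_cases hji : j = i
      · rw [if_pos hji, if_pos hji, if_neg (by omega), hji, ef_self]
        simp only [eps_zero]
        ring
      · rw [if_neg hji, if_neg hji, ef_ne hji]; ring

lemma uK_zpow (s : ℤ) : uK ^ s = K.mk (fun _ => 0) s := by
  induction s using Int.induction_on with
  | zero => rw [zpow_zero]; rfl
  | succ m ih =>
      rw [zpow_add_one, ih]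
      refine K.ext (fun j => ?_) rfl
      show (0:ℤ) + eps 0 * eps m * 0 = 0
      ring
  | pred m ih =>
      rw [show (-(m:ℤ) - 1) = (-(m:ℤ)) - 1 by ring, zpow_sub_one, ih, uK_inv]
      refine K.ext (fun j => ?_) rfl
      show (0:ℤ) + eps 0 * eps (-(m:ℤ)) * 0 = 0
      ring

lemma phi_pb {v : ℤ → ℤ} (T : ℤ) (n : ℕ) (htop : ∀ j, T < j → v j = 0) :
    phi (pb v T n) = K.mk (fun j => if (T:ℤ) - n < j then v j else 0) 0 := by
  induction n with
  | zero =>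
      rw [show pb v T 0 = 1 from rfl, map_one]
      refine K.ext (fun j => ?_) rfl
      show (0:ℤ) = if (T:ℤ) - 0 < j then v j else 0
      by_cases hj : (T:ℤ) - 0 < j
      · rw [if_pos hj, htop j (by push_cast at hj ⊢; omega)]
      · rw [if_neg hj]
  | succ n ih =>
      rw [pb_succ, map_mul, ih, map_zpow, phi_A, aK_zpow]
      refine K.ext (fun j => ?_) (by simp)
      simp only [K.mul_v, K.mk_v, K.mk_k, eps_zero]
      by_cases hji : j = (T:ℤ) - n
      · rw [if_pos hji, if_neg (by omega), if_pos (by omega), hji]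
        split_ifs with h3
        · have h2 := eps_mul_self (v ((T:ℤ) - n + 1))
          unfold xc
          linear_combination (v ((T:ℤ) - n)) * h2
        · exfalso; push_cast at h3; omega
      · rw [if_neg hji]
        by_cases hj2 : (T:ℤ) - n < j
        · rw [if_pos hj2]
          split_ifs <;> try ring
          all_goals (exfalso; rename_i hf; push_cast at hf; omega)
        · rw [if_neg hj2]
          split_ifs <;> try ring
          all_goals (exfalso; rename_i hf; push_cast at hf; omega)

end Stmt15

namespace Stmt15

/-- positive cone in `K` -/
def posK (z : K) : Prop :=
  0 < z.k ∨ (z.k = 0 ∧ ∃ T : ℤ, (∀ j, T < j → z.v j = 0) ∧ 0 < z.v T)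

lemma posK_one : ¬ posK 1 := by
  rintro (h | ⟨_, T, _, hv⟩)
  · exact absurd h (by norm_num)
  · exact absurd hv (by norm_num [K.one_v])

lemma posK_mul {x y : K} (hx : posK x) (hy : posK y) : posK (x * y) := by
  rcases hx with hk | ⟨hk0, T1, hT1, hv1⟩
  · rcases hy with hk' | ⟨hk0', _, _, _⟩
    · exact Or.inl (by rw [K.mul_k]; omega)
    · exact Or.inl (by rw [K.mul_k]; omega)
  · rcases hy with hk' | ⟨hk0', T2, hT2, hv2⟩
    · exact Or.inl (by rw [K.mul_k]; omega)
    · refine Or.inr ⟨by rw [K.mul_k]; omega, ?_⟩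
      rcases lt_trichotomy T1 T2 with h12 | h12 | h12
      · refine ⟨T2, fun j hj => ?_, ?_⟩
        · rw [K.mul_v, hT1 j (by omega), hT2 j hj]; ring
        · rw [K.mul_v, hT1 T2 (by omega), hT1 (T2+1) (by omega), hk0, eps_zero]
          linarith
      · refine ⟨T1, fun j hj => ?_, ?_⟩
        · rw [K.mul_v, hT1 j hj, hT2 j (by omega)]; ring
        · rw [K.mul_v, hT1 (T1+1) (by omega), hk0, eps_zero]
          have hy : 0 < y.v T1 := by rw [h12]; exact hv2
          linarith
      · refine ⟨T1, fun j hj => ?_, ?_⟩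
        · rw [K.mul_v, hT1 j hj, hT2 j (by omega)]; ring
        · rw [K.mul_v, hT2 T1 (by omega)]
          linarith [hv1]

lemma posK_total {z : K} (hbdd : ∃ N : ℤ, ∀ j, N < j → z.v j = 0) (hz : z ≠ 1) :
    posK z ∨ posK z⁻¹ := by
  rcases lt_trichotomy z.k 0 with hk | hk | hk
  · exact Or.inr (Or.inl (by rw [K.inv_k]; omega))
  · by_cases hv : ∀ j, z.v j = 0
    · exact absurd (K.ext hv hk) hz
    · push_neg at hv
      obtain ⟨N, hN⟩ := hbdd
      obtain ⟨T, hT1, hT2⟩ := Int.exists_greatest_of_bdd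
        (P := fun j => z.v j ≠ 0)
        ⟨N, fun j hj => by by_contra hcon; exact hj (hN j (by omega))⟩ hv
      have htop : ∀ j, T < j → z.v j = 0 := by
        intro j hj
        by_contra hcon
        exact absurd (hT2 j hcon) (by omega)
      rcases lt_trichotomy (z.v T) 0 with hvT | hvT | hvT
      · refine Or.inr (Or.inr ⟨by rw [K.inv_k]; omega, T, fun j hj => ?_, ?_⟩)
        · rw [K.inv_v, htop j hj]; ring
        · rw [K.inv_v, htop (T+1) (by omega), hk, eps_zero]
          linarith
      · exact absurd hvT hT1
      · exact Or.inl (Or.inr ⟨hk, T, htop, hvT⟩)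
  · exact Or.inl (Or.inl hk)

lemma posK_asymm {z : K} (h1 : posK z) (h2 : posK z⁻¹) : False := by
  rcases h1 with hk | ⟨hk0, T1, hT1, hv1⟩
  · rcases h2 with hk' | ⟨hk0', _, _, _⟩
    · rw [K.inv_k] at hk'; omega
    · rw [K.inv_k] at hk0'; omega
  · rcases h2 with hk' | ⟨hk0', T2, hT2, hv2⟩
    · rw [K.inv_k] at hk'; omega
    · rcases lt_trichotomy T1 T2 with h12 | h12 | h12
      · rw [K.inv_v, hT1 T2 (by omega)] at hv2
        simp at hv2
      · rw [K.inv_v, ← h12, hT1 (T1+1) (by omega), hk0, eps_zero] at hv2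
        linarith
      · have := hT2 T1 (by omega)
        rw [K.inv_v, hT1 (T1+1) (by omega), hk0, eps_zero] at this
        omega

/-- the right order on `GuGroup` -/
noncomputable def rOrd (f g : GuGroup) : Prop := posK (phi (g * f⁻¹))

lemma phi_ne_one {g : GuGroup} (hg : g ≠ 1) : phi g ≠ 1 := by
  intro hcon
  exact hg (phi_inj (by rw [hcon, map_one]))

lemma rOrd_irrefl : ∀ a : GuGroup, ¬ rOrd a a := by
  intro a h
  unfold rOrd at h
  rw [mul_inv_cancel, map_one] at h
  exact posK_one h

lemma rOrd_trans : ∀ a b c : GuGroup, rOrd a b → rOrd b c → rOrd a c := by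
  intro a b c h1 h2
  unfold rOrd at *
  have h3 := posK_mul h2 h1
  rw [← map_mul, show c * b⁻¹ * (b * a⁻¹) = c * a⁻¹ by group] at h3
  exact h3

lemma rOrd_trichotomous : ∀ a b : GuGroup, rOrd a b ∨ a = b ∨ rOrd b a := by
  intro a b
  by_cases hab : b * a⁻¹ = 1
  · exact Or.inr (Or.inl (mul_inv_eq_one.mp hab).symm)
  · obtain ⟨N, hN⟩ := bddSupp (b * a⁻¹)
    have h1 := posK_total (z := phi (b * a⁻¹))
      ⟨(N:ℤ), fun j hj => hN j (lt_abs.mpr (Or.inl hj))⟩ (phi_ne_one hab)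
    rcases h1 with h | h
    · exact Or.inl h
    · refine Or.inr (Or.inr ?_)
      unfold rOrd
      rw [← map_inv, show (b * a⁻¹)⁻¹ = a * b⁻¹ by group] at h
      exact h

lemma rOrd_invariant : ∀ f g h : GuGroup, rOrd f g → rOrd (f * h) (g * h) := by
  intro f g h h1
  unfold rOrd at *
  rw [show g * h * (f * h)⁻¹ = g * f⁻¹ by group]
  exact h1

lemma rOrd_isRightOrder : IsRightOrder rOrd := by
  refine ⟨?_, rOrd_invariant⟩
  exact { trichotomous := fun a b h1 h2 => ((rOrd_trichotomous a b).resolve_left h1).resolve_right h2, irrefl := rOrd_irrefl, trans := rOrd_trans }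

end Stmt15

namespace Stmt15

section OrderLemmas
variable {H : Type*} [Group H] {r : H → H → Prop}

lemma ro_trans (hr : IsRightOrder r) {x y z : H} (h1 : r x y) (h2 : r y z) : r x z :=
  hr.1.toIsStrictOrder.toIsTrans.trans x y z h1 h2

lemma ro_irrefl (hr : IsRightOrder r) (x : H) : ¬ r x x :=
  hr.1.toIsStrictOrder.toIrrefl.irrefl x

lemma ro_tri (hr : IsRightOrder r) (x y : H) : r x y ∨ x = y ∨ r y x :=
  haveI := hr.1; trichotomous x y

lemma ro_asymm (hr : IsRightOrder r) {x y : H} (h1 : r x y) (h2 : r y x) : False :=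
  ro_irrefl hr x (ro_trans hr h1 h2)

lemma ro_inv_flip (hr : IsRightOrder r) {x : H} (h : r x 1) : r 1 x⁻¹ := by
  have h2 := hr.2 x 1 x⁻¹ h
  rwa [mul_inv_cancel, one_mul] at h2

lemma ro_inv_flip' (hr : IsRightOrder r) {x : H} (h : r 1 x) : r x⁻¹ 1 := by
  have h2 := hr.2 1 x x⁻¹ h
  rwa [mul_inv_cancel, one_mul] at h2

lemma ro_pos_mul (hr : IsRightOrder r) {x y : H} (hx : r 1 x) (hy : r 1 y) : r 1 (x * y) := by
  have h2 := hr.2 1 x y hx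
  rw [one_mul] at h2
  exact ro_trans hr hy h2

lemma ro_neg_mul (hr : IsRightOrder r) {x y : H} (hx : r x 1) (hy : r y 1) : r (x * y) 1 := by
  have h2 := hr.2 x 1 y hx
  rw [one_mul] at h2
  exact ro_trans hr h2 hy

/-- In a right-ordered group with least positive element `a`, no nontrivial `b`
is inverted by conjugation by `a`. -/
lemma lemINV (hr : IsRightOrder r) {a : H} (ha : LeastPos r a) {b : H} (hb : b ≠ 1)
    (hrel : a * b * a⁻¹ = b⁻¹) : False := by
  have posCase : ∀ b' : H, b' ≠ 1 → r 1 b' → a * b' * a⁻¹ = b'⁻¹ → False := by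
    intro b' hb' hpos hrel'
    rcases ha.2 b' hpos with rfl | hab
    · have h1 : b' * b' * b'⁻¹ = b' := by group
      rw [hrel'] at h1
      have h2 : b' * b' = 1 := by nth_rewrite 1 [← h1]; exact inv_mul_cancel b'
      have h3 := ro_pos_mul hr hpos hpos
      rw [h2] at h3
      exact ro_irrefl hr 1 h3
    · have h3 := hr.2 a b' a⁻¹ hab
      rw [mul_inv_cancel] at h3
      have hba : b' * a⁻¹ = a⁻¹ * b'⁻¹ := by
        rw [← hrel']; group
      rw [hba] at h3
      have h4 := hr.2 1 (a⁻¹ * b'⁻¹) b' h3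
      rw [one_mul, inv_mul_cancel_right] at h4
      have h5 : r a⁻¹ 1 := ro_inv_flip' hr ha.1
      exact ro_asymm hr h4 (ro_trans hr h5 hpos)
  rcases ro_tri hr 1 b with h | h | h
  · exact posCase b hb h hrel
  · exact hb h.symm
  · refine posCase b⁻¹ (by simpa using hb) (ro_inv_flip hr h) ?_
    have h2 : a * b⁻¹ * a⁻¹ = (a * b * a⁻¹)⁻¹ := by group
    rw [hrel, inv_inv] at h2
    rw [h2, inv_inv]

/-- In a right-ordered group with least positive element `a`, `a` is not a
product `c * d` of nontrivial elements with `c² = d²`. -/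
lemma lemCD (hr : IsRightOrder r) {a : H} (ha : LeastPos r a) {c d : H} (hc : c ≠ 1)
    (hd : d ≠ 1) (hcd : a = c * d) (hsq : c * c = d * d) : False := by
  rcases ro_tri hr 1 c with hpc | he | hnc
  · have hd2 : r 1 (d * d) := by rw [← hsq]; exact ro_pos_mul hr hpc hpc
    have hpd : r 1 d := by
      rcases ro_tri hr 1 d with h | h | h
      · exact h
      · exact absurd h.symm hd
      · exact absurd hd2 (fun hcon => ro_asymm hr hcon (ro_neg_mul hr h h))
    rcases ha.2 d hpd with rfl | had
    · have h7 : c * d = 1 * d := by rw [one_mul, ← hcd]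
      exact hc (mul_right_cancel h7)
    · have h6 := hr.2 1 c d hpc
      rw [one_mul, ← hcd] at h6
      exact ro_asymm hr had h6
  · exact hc he.symm
  · have hd2 : r (d * d) 1 := by rw [← hsq]; exact ro_neg_mul hr hnc hnc
    have hnd : r d 1 := by
      rcases ro_tri hr 1 d with h | h | h
      · exact absurd hd2 (fun hcon => ro_asymm hr (ro_pos_mul hr h h) hcon)
      · exact absurd h.symm hd
      · exact h
    have hna : r a 1 := by rw [hcd]; exact ro_neg_mul hr hnc hnd
    exact ro_asymm hr ha.1 hna

end OrderLemmas
end Stmt15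

namespace Stmt15

lemma conjK (z : K) (w : ℤ → ℤ) :
    z * K.mk w 0 * z⁻¹ = K.mk
      (fun j => eps z.k * eps (z.v (j+1)) * w j + z.v j * (1 - eps (w (j+1)))) 0 := by
  refine K.ext (fun j => ?_) (by simp)
  simp only [K.mul_v, K.mul_k, K.inv_v, K.inv_k, K.mk_v, K.mk_k, add_zero]
  rw [eps_add, mul_assoc (eps (z.v (j+1+1))), eps_eps_mul, eps_eps_mul]
  rcases eps_cases z.k with hk | hk <;> rcases eps_cases (z.v (j+1)) with h1 | h1 <;>
    rcases eps_cases (w (j+1)) with h2 | h2 <;> rw [hk, h1, h2] <;> ring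

lemma eps_mod_zero {x : ℤ} (h : x % 2 = 0) : eps x = 1 :=
  eps_even (Int.even_iff.mpr h)

lemma eps_mod_one {x : ℤ} (h : x % 2 = 1) : eps x = -1 :=
  eps_odd (fun he => by rw [Int.even_iff.mp he] at h; norm_num at h)

lemma eps_congr_mod {x y : ℤ} (h : x % 2 = y % 2) : eps x = eps y := by
  rcases Int.even_or_odd y with hy | hy
  · rw [eps_even hy, eps_even (Int.even_iff.mpr (by rw [h]; exact Int.even_iff.mp hy))]
  · have hy' : ¬ Even y := by rw [Int.not_even_iff_odd]; exact hy
    rw [eps_odd hy', eps_odd (fun he => hy' (Int.even_iff.mpr (by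
      rw [← h]; exact Int.even_iff.mp he)))]

section CD
variable (m : ℤ) (v : ℤ → ℤ) (T : ℤ)

/-- the state machine for the `c`,`d` decomposition -/
noncomputable def stF : ℕ → Bool
  | 0 => decide (m % 2 = 1)
  | n+1 => if stF n then decide (m % 2 = 1) else decide ((m + v (T - n) / 2) % 2 = 1)

noncomputable def stZ (j : ℤ) : Bool := stF m v T (T - j).toNat

noncomputable def cF (j : ℤ) : ℤ := if stZ m v T j then v j else v j / 2
noncomputable def dF (j : ℤ) : ℤ := if stZ m v T j then 0 else v j / 2

variable {m v T}
variable (hev : ∀ j, v j % 2 = 0) (htop : ∀ j, T < j → v j = 0)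

include hev htop in
lemma cd_state (j : ℤ) : ((m + cF m v T (j+1)) % 2 = 1) ↔ (stZ m v T j = true) := by
  by_cases hj : T ≤ j
  · have h1 : stZ m v T j = decide (m % 2 = 1) := by
      unfold stZ
      rw [show (T - j).toNat = 0 by omega]
      rfl
    have h2 : cF m v T (j+1) = 0 := by
      unfold cF
      rw [htop (j+1) (by omega)]
      simp
    rw [h1, h2, add_zero, decide_eq_true_eq]
  · push_neg at hj
    have h1 : (T - j).toNat = (T - (j+1)).toNat + 1 := by omega
    have h2 : T - ((T - (j+1)).toNat : ℤ) = j + 1 := by omega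
    have h3 : stZ m v T j
        = if stZ m v T (j+1) then decide (m % 2 = 1)
          else decide ((m + v (j+1) / 2) % 2 = 1) := by
      unfold stZ
      rw [h1]
      show stF m v T ((T - (j+1)).toNat + 1) = _
      rw [show stF m v T ((T - (j+1)).toNat + 1)
          = if stF m v T ((T - (j+1)).toNat) then decide (m % 2 = 1)
            else decide ((m + v (T - ((T - (j+1)).toNat:ℤ)) / 2) % 2 = 1) from rfl, h2]
    by_cases hst : stZ m v T (j+1) = true
    · have h4 : cF m v T (j+1) = v (j+1) := by unfold cF; rw [if_pos hst]
      rw [h3, if_pos hst, h4, decide_eq_true_eq]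
      have := hev (j+1)
      omega
    · have h4 : cF m v T (j+1) = v (j+1) / 2 := by
        unfold cF
        rw [if_neg hst]
      rw [h3, if_neg hst, h4, decide_eq_true_eq]
  

include hev htop in
lemma cd_eps (j : ℤ) :
    eps (m + cF m v T (j+1)) = if stZ m v T j = true then -1 else 1 := by
  by_cases hst : stZ m v T j = true
  · rw [if_pos hst]
    refine eps_mod_one ?_
    have h1 := (cd_state hev htop j).mpr hst
    omega
  · rw [if_neg hst]
    refine eps_mod_zero ?_
    have h1 : ¬ ((m + cF m v T (j+1)) % 2 = 1) := fun hcon =>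
      hst ((cd_state hev htop j).mp hcon)
    omega

include hev htop in
lemma cd_eq1 (j : ℤ) : cF m v T j + eps (m + cF m v T (j+1)) * dF m v T j = v j := by
  rw [cd_eps hev htop j]
  by_cases hst : stZ m v T j = true
  · rw [if_pos hst]
    unfold cF dF
    rw [if_pos hst, if_pos hst]
    ring
  · rw [if_neg hst]
    unfold cF dF
    rw [if_neg hst, if_neg hst]
    have := hev j
    omega

include hev in
lemma cd_par (j : ℤ) : dF m v T j % 2 = cF m v T j % 2 := by
  unfold cF dF
  by_cases hst : stZ m v T j = true
  · rw [if_pos hst, if_pos hst]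
    have := hev j
    omega
  · rw [if_neg hst, if_neg hst]

include hev htop in
lemma cd_eq2 (j : ℤ) :
    cF m v T j * (1 + eps (m + cF m v T (j+1)))
      = dF m v T j * (1 + eps (m + dF m v T (j+1))) := by
  have hpe : eps (m + dF m v T (j+1)) = eps (m + cF m v T (j+1)) := by
    refine eps_congr_mod ?_
    have := cd_par hev (m := m) (T := T) (j+1)
    omega
  rw [hpe, cd_eps hev htop j]
  by_cases hst : stZ m v T j = true
  · rw [if_pos hst]; ring
  · rw [if_neg hst]
    unfold cF dF
    rw [if_neg hst, if_neg hst]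

lemma cd_zero {j : ℤ} (hj : v j = 0) : cF m v T j = 0 ∧ dF m v T j = 0 := by
  unfold cF dF
  rw [hj]
  norm_num

include hev in
lemma cd_bottom_state (hm : m % 2 = 0) {T0 : ℤ} (hT0 : ∀ j, T0 < j → j ≤ T → v j = 0)
    (hT0T : T0 ≤ T) : stZ m v T T0 = false := by
  have key : ∀ n : ℕ, (∀ j, T - n < j → j ≤ T → v j = 0) → stF m v T n = false := by
    intro n
    induction n with
    | zero =>
        intro _
        show decide (m % 2 = 1) = false
        simp
        omega
    | succ n ih =>
        intro hz
        show (if stF m v T n then decide (m % 2 = 1)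
            else decide ((m + v (T - n) / 2) % 2 = 1)) = false
        rw [ih (fun j h1 h2 => hz j (by push_cast at h1 ⊢; omega) h2), if_neg (by simp)]
        rw [hz (T - n) (by push_cast; omega) (by omega)]
        simp
        omega
  unfold stZ
  exact key _ (fun j h1 h2 => hT0 j (by omega) h2)

end CD
end Stmt15

namespace Stmt15

lemma Ag_ne_one (i : ℤ) : Ag i ≠ 1 := by
  intro hcon
  have h1 : (aK i).v i = (1:K).v i := by rw [← phi_A i, hcon, map_one]
  rw [K.one_v] at h1
  change ef i i = 0 at h1
  rw [ef_self] at h1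
  norm_num at h1

lemma noDiscrete (r : GuGroup → GuGroup → Prop) (hr : IsRightOrder r) (a : GuGroup)
    (ha : LeastPos r a) : False := by
  have hane : a ≠ 1 := by
    intro hcon
    rw [hcon] at ha
    exact ro_irrefl hr 1 ha.1
  obtain ⟨N, hN⟩ := bddSupp a
  set v : ℤ → ℤ := (phi a).v with hv
  set k : ℤ := (phi a).k with hk
  by_cases hkpar : k % 2 = 0
  · by_cases hodd : ∃ j, ¬ (v j % 2 = 0)
    · -- some coordinate is odd : a inverts (Ag (j0-1))^2
      obtain ⟨j0, hj0⟩ := hodd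
      set b : GuGroup := (Ag (j0 - 1)) ^ (2:ℤ) with hb
      have hphib : phi b = K.mk (fun mm => if mm = j0 - 1 then 2 else 0) 0 := by
        rw [hb, map_zpow, phi_A, aK_zpow]
      have h1 : phi (a * b * a⁻¹) = phi b⁻¹ := by
        rw [map_mul, map_mul, map_inv, hphib, conjK]
        rw [map_inv, hphib]
        refine K.ext (fun mm => ?_) (by simp)
        simp only [K.mk_v, K.inv_v, K.inv_k, K.mk_k]
        have hw1 : eps (if mm + 1 = j0 - 1 then (2:ℤ) else 0) = 1 := by
          split_ifs
          · exact eps_even ⟨1, rfl⟩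
          · exact eps_zero
        by_cases hmm : mm = j0 - 1
        · rw [if_pos hmm, hw1, hmm, show j0 - 1 + 1 = j0 by ring, ← hk, ← hv,
            eps_mod_zero hkpar, eps_mod_one (show v j0 % 2 = 1 by omega), eps_zero]
          ring
        · rw [if_neg hmm, hw1]
          ring
      have h2 : a * b * a⁻¹ = b⁻¹ := phi_inj h1
      have hbne : b ≠ 1 := by
        intro hcon
        have h3 : (phi b).v (j0-1) = (1:K).v (j0-1) := by rw [hcon, map_one]
        rw [hphib, K.mk_v, if_pos rfl, K.one_v] at h3
        norm_num at h3
      exact lemINV hr ha hbne h2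
    · -- all coordinates even, k even : a = C * D with C² = D²
      push_neg at hodd
      have hev : ∀ j, v j % 2 = 0 := fun j => by have := hodd j; omega
      set m : ℤ := k / 2 with hm
      have hkm : m + m = k := by omega
      set T : ℤ := (N : ℤ) with hT
      have htop : ∀ j, T < j → v j = 0 := fun j hj =>
        hN j (lt_abs.mpr (Or.inl (by omega)))
      set c : ℤ → ℤ := cF m v T with hc
      set d : ℤ → ℤ := dF m v T with hd
      set n : ℕ := 2 * N + 1 with hn
      have hbot : ∀ j, j ≤ T - (n:ℤ) → v j = 0 := by
        intro j hj
        refine hN j (lt_abs.mpr (Or.inr (by push_cast at hj ⊢; omega)))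
      have hctop : ∀ j, T < j → c j = 0 := fun j hj => (cd_zero (htop j hj)).1
      have hdtop : ∀ j, T < j → d j = 0 := fun j hj => (cd_zero (htop j hj)).2
      set Cg : GuGroup := pb c T n * Ug ^ m with hCg
      set Dg : GuGroup := pb d T n * Ug ^ m with hDg
      have phiC : phi Cg = K.mk c m := by
        rw [hCg, map_mul, phi_pb T n hctop, map_zpow, phi_U, uK_zpow]
        refine K.ext (fun j => ?_) (by simp)
        simp only [K.mul_v, K.mk_v, K.mk_k]
        by_cases hj : T - (n:ℤ) < j
        · rw [if_pos hj]; ring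
        · have h0 : c j = 0 := by rw [hc]; exact (cd_zero (hbot j (by omega))).1
          rw [if_neg hj, h0]
          ring
      have phiD : phi Dg = K.mk d m := by
        rw [hDg, map_mul, phi_pb T n hdtop, map_zpow, phi_U, uK_zpow]
        refine K.ext (fun j => ?_) (by simp)
        simp only [K.mul_v, K.mk_v, K.mk_k]
        by_cases hj : T - (n:ℤ) < j
        · rw [if_pos hj]; ring
        · have h0 : d j = 0 := by rw [hd]; exact (cd_zero (hbot j (by omega))).2
          rw [if_neg hj, h0]
          ring
      have hCD : a = Cg * Dg := by
        refine phi_inj ?_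
        rw [map_mul, phiC, phiD]
        refine K.ext (fun j => ?_) (by simp [hkm]; exact hk.symm)
        simp only [K.mul_v, K.mk_v, K.mk_k]
        rw [mul_comm (eps (c (j+1))) (eps m), ← eps_add]
        exact (cd_eq1 hev htop j).symm
      have hsq : Cg * Cg = Dg * Dg := by
        refine phi_inj ?_
        rw [map_mul, phiC, map_mul, phiD]
        refine K.ext (fun j => ?_) (by simp)
        simp only [K.mul_v, K.mk_v, K.mk_k]
        have e1 : ∀ x : ℤ → ℤ, x j + eps (x (j+1)) * eps m * x j
            = x j * (1 + eps (m + x (j+1))) := by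
          intro x
          rw [eps_add, mul_comm (eps m) (eps (x (j+1)))]
          ring
        rw [e1 c, e1 d]
        exact cd_eq2 hev htop j
      -- nontriviality
      have hnontriv : Cg ≠ 1 ∧ Dg ≠ 1 := by
        by_cases hm0 : m = 0
        · have hk0 : k = 0 := by omega
          have hvne : ∃ j, v j ≠ 0 := by
            by_contra hcon
            push_neg at hcon
            exact hane (phi_inj (by rw [map_one]; exact K.ext hcon hk0))
          obtain ⟨T0, hT01, hT02⟩ := Int.exists_greatest_of_bdd
            (P := fun j => v j ≠ 0)
            ⟨N, fun j hj => by
              by_contra hcon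
              exact hj (hN j (lt_abs.mpr (Or.inl (by omega))))⟩ hvne
          have hT0T : T0 ≤ T := by
            have h5 : ¬ ((N:ℤ) < |T0|) := fun hcon => hT01 (hN T0 hcon)
            rw [hT]
            have := le_abs_self T0
            omega
          have hstate : stZ m v T T0 = false := by
            refine cd_bottom_state hev (by omega) (fun j h1 _ => ?_) hT0T
            by_contra hcon
            have := hT02 j hcon
            omega
          have hcT0 : c T0 = v T0 / 2 := by
            rw [hc]
            unfold cF
            rw [hstate]
            rfl
          have hdT0 : d T0 = v T0 / 2 := by
            rw [hd]
            unfold dF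
            rw [hstate]
            rfl
          have hhalf : v T0 / 2 ≠ 0 := by
            have := hev T0
            omega
          constructor
          · intro hcon
            have h3 : (phi Cg).v T0 = (1:K).v T0 := by rw [hcon, map_one]
            rw [phiC, K.mk_v, hcT0, K.one_v] at h3
            exact hhalf h3
          · intro hcon
            have h3 : (phi Dg).v T0 = (1:K).v T0 := by rw [hcon, map_one]
            rw [phiD, K.mk_v, hdT0, K.one_v] at h3
            exact hhalf h3
        · constructor
          · intro hcon
            have h3 : (phi Cg).k = (1:K).k := by rw [hcon, map_one]
            rw [phiC, K.mk_k, K.one_k] at h3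
            exact hm0 h3
          · intro hcon
            have h3 : (phi Dg).k = (1:K).k := by rw [hcon, map_one]
            rw [phiD, K.mk_k, K.one_k] at h3
            exact hm0 h3
      exact lemCD hr ha hnontriv.1 hnontriv.2 hCD hsq
  · -- k odd : a inverts Ag (N+2)
    set i : ℤ := (N:ℤ) + 2 with hi
    have h1 : phi (a * Ag i * a⁻¹) = phi (Ag i)⁻¹ := by
      rw [map_mul, map_mul, map_inv, phi_A, show aK i = K.mk (ef i) 0 from rfl, conjK,
        map_inv, phi_A, aK_inv]
      refine K.ext (fun j => ?_) (by simp)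
      simp only [K.mk_v]
      by_cases hji : j = i
      · rw [hji, ef_self, eps_ef_ne (by omega : i + 1 ≠ i),
          ← hk, ← hv, hN (i+1) (lt_abs.mpr (Or.inl (by omega))),
          eps_mod_one (by omega), eps_zero]
        ring
      · rw [ef_ne hji]
        by_cases hji2 : j + 1 = i
        · rw [hji2, ef_self, ← hv, hN j (lt_abs.mpr (Or.inl (by omega)))]
          ring
        · rw [eps_ef_ne hji2]
          ring
    have h2 : a * Ag i * a⁻¹ = (Ag i)⁻¹ := phi_inj h1
    exact lemINV hr ha (Ag_ne_one i) h2

end Stmt15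




/-- The group `⟨G, u⟩` is right-orderable but admits no discrete right-order. -/
theorem stmt15 :
    (∃ r : GuGroup → GuGroup → Prop, IsRightOrder r) ∧
    ¬ ∃ r : GuGroup → GuGroup → Prop, IsRightOrder r ∧ ∃ a : GuGroup, LeastPos r a := by
  constructor
  · exact ⟨Stmt15.rOrd, Stmt15.rOrd_isRightOrder⟩
  · rintro ⟨r, hr, a, ha⟩
    exact Stmt15.noDiscrete r hr a ha
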